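/- Let f_90 be the local rule f_90(a,b,c) = a + c. For every integer n ≥ 1 and all a, b ∈ Q, the transition functions (f_90)_{(n),a-*} and (f_90)_{(n),*-b} on Q^n are bijective; that is, CA-90_{a-*}(n) and CA-90_{*-b}(n) are reversible for all positive integers n. -/
import Mathlib


/-- The state set `Q = {0,1}` as `ZMod 2`. -/
abbrev Q : Type := ZMod 2

/-- A triplet local rule `f : Q³ → Q`. -/
abbrev Rule : Type := Q → Q → Q → Q

/-- A configuration of length `n`. -/
abbrev Config (n : ℕ) : Type := Fin n → Q

/-- The transition sending `x` to the word whose `i`-th letter is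
`f (x (i-1)) (x i) (x (i+1))`, where the virtual boundary letters
`x₀` and `x_{n+1}` are given as `x0` and `xn1`. -/
def caTrans {n : ℕ} (f : Rule) (x0 xn1 : Q) (x : Config n) : Config n :=
  fun i =>
    f (if _h : i.1 = 0 then x0
       else x ⟨i.1 - 1, Nat.lt_of_le_of_lt (Nat.sub_le _ _) i.isLt⟩)
      (x i)
      (if h : i.1 + 1 < n then x ⟨i.1 + 1, h⟩ else xn1)

/-- The first letter `x₁` of a nonempty configuration. -/
def firstCell {n : ℕ} (hn : 0 < n) (x : Config n) : Q := x ⟨0, hn⟩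

/-- The last letter `xₙ` of a nonempty configuration. -/
def lastCell {n : ℕ} (hn : 0 < n) (x : Config n) : Q :=
  x ⟨n - 1, Nat.sub_lt hn Nat.one_pos⟩

/-- Fixed boundary `a-b` : `x₀ = a`, `x_{n+1} = b`. -/
def fixedBC {n : ℕ} (f : Rule) (a b : Q) : Config n → Config n :=
  fun x => caTrans f a b x

/-- Boundary `a-*` : `x₀ = a`, `x_{n+1} = xₙ`. -/
def leftFixedBC {n : ℕ} (hn : 0 < n) (f : Rule) (a : Q) : Config n → Config n :=
  fun x => caTrans f a (lastCell hn x) x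

/-- Boundary `*-b` : `x₀ = x₁`, `x_{n+1} = b`. -/
def rightFixedBC {n : ℕ} (hn : 0 < n) (f : Rule) (b : Q) : Config n → Config n :=
  fun x => caTrans f (firstCell hn x) b x

/-- Free boundary `*-*` : `x₀ = x₁`, `x_{n+1} = xₙ`. -/
def freeBC {n : ℕ} (hn : 0 < n) (f : Rule) : Config n → Config n :=
  fun x => caTrans f (firstCell hn x) (lastCell hn x) x

/-- Cyclic boundary `*` : `x₀ = xₙ`, `x_{n+1} = x₁`. -/
def cyclicBC {n : ℕ} (hn : 0 < n) (f : Rule) : Config n → Config n :=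
  fun x => caTrans f (lastCell hn x) (firstCell hn x) x

/-- Rule 90 : `f(a,b,c) = a + c`. -/
def f90 : Rule := fun a _ c => a + c


-- helpers
lemma qdec1 : ∀ p q r s : Q, p + q = r + s → q - s = p - r := by decide
lemma parityLemma (n : ℕ) (e : ℕ → Q)
    (hstep : ∀ j, j + 2 < n → e (j + 2) = e j) :
    ∀ j, j < n → e j = e (j % 2) := by
  intro j
  induction j using Nat.strong_induction_on with
  | _ j ih =>
    intro hj
    match j with
    | 0 => rfl
    | 1 => rfl
    | (k+2) =>
      have h1 : e (k + 2) = e k := hstep k hj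
      have h2 : e k = e (k % 2) := ih k (by omega) (by omega)
      have h3 : (k + 2) % 2 = k % 2 := by omega
      rw [h1, h2, h3]

lemma leftInj (n : ℕ) (hn : 1 ≤ n) (a : Q) :
    Function.Injective (leftFixedBC hn f90 a) := by
  intro x x' hxy
  set e : ℕ → Q := fun j => if h : j < n then x ⟨j, h⟩ - x' ⟨j, h⟩ else 0 with he
  have epos : ∀ j (h : j < n), e j = x ⟨j, h⟩ - x' ⟨j, h⟩ := by
    intro j h; rw [he]; exact dif_pos h
  have hstep : ∀ j, j + 2 < n → e (j + 2) = e j := by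
    intro j hj
    have h := congrFun hxy ⟨j + 1, by omega⟩
    have c1 : j + 1 + 1 < n := by omega
    simp [leftFixedBC, caTrans, f90, lastCell, c1] at h
    rw [epos _ hj, epos _ (by omega : j < n)]
    exact qdec1 _ _ _ _ h
  have hpar := parityLemma n e hstep
  by_cases hn2 : 2 ≤ n
  · have c1 : 1 < n := hn2
    have c2 : ¬ (n - 1 = 0) := by omega
    have c3 : ¬ (n - 1 + 1 < n) := by omega
    have h0 := congrFun hxy ⟨0, by omega⟩
    simp [leftFixedBC, caTrans, f90, lastCell, c1] at h0
    have he1 : e 1 = 0 := by rw [epos 1 c1]; exact sub_eq_zero_of_eq h0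
    have hl := congrFun hxy ⟨n - 1, by omega⟩
    simp [leftFixedBC, caTrans, f90, lastCell, c2, c3] at hl
    have hl' : e (n - 1) = e (n - 1 - 1) := by
      rw [epos _ (by omega), epos _ (by omega)]
      exact qdec1 _ _ _ _ hl
    have he0 : e 0 = 0 := by
      have p1 := hpar (n - 1) (by omega)
      have p2 := hpar (n - 2) (by omega)
      rcases Nat.even_or_odd n with ⟨k, hk⟩ | ⟨k, hk⟩
      · rw [(by omega : (n - 1) % 2 = 1)] at p1
        rw [(by omega : (n - 2) % 2 = 0)] at p2
        calc e 0 = e (n - 2) := p2.symm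
          _ = e (n - 1) := hl'.symm
          _ = e 1 := p1
          _ = 0 := he1
      · rw [(by omega : (n - 1) % 2 = 0)] at p1
        rw [(by omega : (n - 2) % 2 = 1)] at p2
        calc e 0 = e (n - 1) := p1.symm
          _ = e (n - 2) := hl'
          _ = e 1 := p2
          _ = 0 := he1
    funext i
    obtain ⟨j, hj⟩ := i
    have hp := hpar j hj
    rw [epos j hj] at hp
    have hz : e (j % 2) = 0 := by
      have : j % 2 = 0 ∨ j % 2 = 1 := by omega
      rcases this with h | h <;> rw [h] <;> assumption
    rw [hz] at hp
    exact sub_eq_zero.mp hp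
  · have hn1 : n = 1 := by omega
    subst hn1
    have g1 := congrFun hxy ⟨0, by omega⟩
    simp [leftFixedBC, caTrans, f90, lastCell] at g1
    funext i
    have : i = ⟨0, by omega⟩ := Subsingleton.elim _ _
    rw [this]; exact g1

lemma qdec2' : ∀ p q r s : Q, p + q = r + s → p - r = q - s := by decide

lemma rightInj (n : ℕ) (hn : 1 ≤ n) (b : Q) :
    Function.Injective (rightFixedBC hn f90 b) := by
  intro x x' hxy
  set e : ℕ → Q := fun j => if h : j < n then x ⟨j, h⟩ - x' ⟨j, h⟩ else 0 with he
  have epos : ∀ j (h : j < n), e j = x ⟨j, h⟩ - x' ⟨j, h⟩ := by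
    intro j h; rw [he]; exact dif_pos h
  have hstep : ∀ j, j + 2 < n → e (j + 2) = e j := by
    intro j hj
    have h := congrFun hxy ⟨j + 1, by omega⟩
    have c1 : j + 1 + 1 < n := by omega
    simp [rightFixedBC, caTrans, f90, firstCell, c1] at h
    rw [epos _ hj, epos _ (by omega : j < n)]
    exact qdec1 _ _ _ _ h
  have hpar := parityLemma n e hstep
  by_cases hn2 : 2 ≤ n
  · have c1 : 1 < n := hn2
    have c2 : ¬ (n - 1 = 0) := by omega
    have c3 : ¬ (n - 1 + 1 < n) := by omega
    have h0 := congrFun hxy ⟨0, by omega⟩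
    simp [rightFixedBC, caTrans, f90, firstCell, c1] at h0
    have h01 : e 0 = e 1 := by
      rw [epos 0 (by omega), epos 1 c1]
      exact qdec2' _ _ _ _ h0
    have hl := congrFun hxy ⟨n - 1, by omega⟩
    simp [rightFixedBC, caTrans, f90, firstCell, c2, c3] at hl
    have hl' : e (n - 1 - 1) = 0 := by
      rw [epos _ (by omega)]; exact sub_eq_zero_of_eq hl
    have he1 : e 1 = 0 := by
      have p2 := hpar (n - 2) (by omega)
      rcases Nat.even_or_odd n with ⟨k, hk⟩ | ⟨k, hk⟩
      · rw [(by omega : (n - 2) % 2 = 0)] at p2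
        calc e 1 = e 0 := h01.symm
          _ = e (n - 2) := p2.symm
          _ = 0 := hl'
      · rw [(by omega : (n - 2) % 2 = 1)] at p2
        calc e 1 = e (n - 2) := p2.symm
          _ = 0 := hl'
    have he0 : e 0 = 0 := h01.trans he1
    funext i
    obtain ⟨j, hj⟩ := i
    have hp := hpar j hj
    rw [epos j hj] at hp
    have hz : e (j % 2) = 0 := by
      have : j % 2 = 0 ∨ j % 2 = 1 := by omega
      rcases this with h | h <;> rw [h] <;> assumption
    rw [hz] at hp
    exact sub_eq_zero.mp hp
  · have hn1 : n = 1 := by omega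
    subst hn1
    have g1 := congrFun hxy ⟨0, by omega⟩
    simp [rightFixedBC, caTrans, f90, firstCell] at g1
    funext i
    have : i = ⟨0, by omega⟩ := Subsingleton.elim _ _
    rw [this]; exact g1


theorem statement9 (n : ℕ) (hn : 1 ≤ n) (a b : Q) :
    Function.Bijective (leftFixedBC hn f90 a) ∧
    Function.Bijective (rightFixedBC hn f90 b) :=
  ⟨Finite.injective_iff_bijective.mp (leftInj n hn a),
   Finite.injective_iff_bijective.mp (rightInj n hn b)⟩
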